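/- Define h(t; σ) := 2(1 − e^{−t})/(2 + t²/σ²) for t ≥ 0. If 0 < σ ≤ 1/(2√2), then sup_{t ≥ 0} h(t; σ) ≤ 0.72·(1 − e^{−√2 σ}). -/

import Mathlib

open Real

theorem sup_h_le (σ : ℝ) (hσ : 0 < σ) (hσ' : σ ≤ 1 / (2 * Real.sqrt 2)) :
    ∀ t : ℝ, 0 ≤ t →
      2 * (1 - Real.exp (-t)) / (2 + t^2 / σ^2) ≤
        0.72 * (1 - Real.exp (-(Real.sqrt 2) * σ)) := by
  intro t ht
  have h2 : (0:ℝ) < Real.sqrt 2 := by positivity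
  have hsq : Real.sqrt 2 ^ 2 = 2 := Real.sq_sqrt (by norm_num)
  set s : ℝ := Real.sqrt 2 * σ with hs_def
  have hs0 : 0 < s := by positivity
  have hs : s ≤ 1/2 := by
    have h := mul_le_mul_of_nonneg_left hσ' h2.le
    have heq : Real.sqrt 2 * (1 / (2 * Real.sqrt 2)) = 1/2 := by
      field_simp
    rw [heq] at h
    exact h
  -- Step 1: LHS ≤ s/2
  have hD : (0:ℝ) < 2 + t^2/σ^2 := by positivity
  have hE : 1 - Real.exp (-t) ≤ t := by
    have := Real.add_one_le_exp (-t); linarith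
  have key1 : 2 * (1 - Real.exp (-t)) / (2 + t^2/σ^2) ≤ s/2 := by
    rw [div_le_iff₀ hD]
    have hu2 : t^2/σ^2 = (t/σ)^2 := (div_pow t σ 2).symm
    rw [hu2]
    set u : ℝ := t/σ with hu_def
    have hu0 : 0 ≤ u := by positivity
    have htu : t = u * σ := (div_mul_cancel₀ t hσ.ne').symm
    have hamgm : 0 ≤ Real.sqrt 2 * (u - Real.sqrt 2)^2 :=
      mul_nonneg h2.le (sq_nonneg _)
    -- goal: 2*(1 - exp(-t)) ≤ s/2 * (2 + u^2)
    nlinarith [hE, hamgm, hsq, hσ, htu, mul_nonneg (mul_nonneg h2.le (sq_nonneg (u - Real.sqrt 2))) hσ.le]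
  -- Step 2: s/2 ≤ 0.72 * (1 - exp(-s))
  have hrw : Real.exp (-(Real.sqrt 2) * σ) = Real.exp (-s) := by
    rw [hs_def, neg_mul]
  rw [hrw]
  have hpos : (0:ℝ) < 1 + s/2 := by linarith
  have h1 : 1 + s/2 ≤ Real.exp (s/2) := by
    have := Real.add_one_le_exp (s/2); linarith
  have h3 : (1 + s/2)^2 ≤ Real.exp s := by
    have hp : (1 + s/2)^2 ≤ Real.exp (s/2)^2 := by
      nlinarith [Real.exp_pos (s/2)]
    calc (1 + s/2)^2 ≤ Real.exp (s/2)^2 := hp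
      _ = Real.exp s := by rw [sq, ← Real.exp_add]; ring_nf
  have hexp2 : Real.exp (-s) ≤ 1 / (1 + s/2)^2 := by
    rw [Real.exp_neg, one_div]
    exact inv_anti₀ (by positivity) h3
  have hinv : 1 / (1 + s/2)^2 * (1 + s/2)^2 = 1 := by
    field_simp
  have key2 : s/2 ≤ 0.72 * (1 - Real.exp (-s)) := by
    nlinarith [hexp2, hinv, hs, hs0, sq_nonneg s,
      mul_nonneg hs0.le (by linarith : (0:ℝ) ≤ 1/2 - s),
      mul_nonneg (mul_nonneg hs0.le hs0.le) (by linarith : (0:ℝ) ≤ 1/2 - s),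
      mul_pos hpos hpos]
  linarith
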